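/- There exists a constant C > 0 such that for every integer q ≥ 2, every integer k ≥ 9, and any two words w and w' of the same length k over an alphabet of q letters with the autocorrelation of w larger than the autocorrelation of w', one has |A_w(q)²·A_{w'}'(q) − A_{w'}(q)²·A_w'(q)| / (A_{w'}(q)³·A_w(q)) ≤ C·k·q^{-k/3+4}·(A_w(q) − A_{w'}(q)) / A_{w'}(q). -/

import Mathlib

/-- The `i`-th autocorrelation bit `b_i` of a word `w` (for `1 ≤ i ≤ w.length`):
`1` if the prefix of `w` of length `i` equals the suffix of `w` of length `i`, else `0`. -/
def acorrBit {α : Type*} [DecidableEq α] (w : List α) (i : ℕ) : ℕ :=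
  if w.take i = w.drop (w.length - i) then 1 else 0

/-- The inverse autocorrelation polynomial `A_w(x) = ∑_{i=1}^k b_i x^(i-1)`, over `ℝ`. -/
noncomputable def APolyR {α : Type*} [DecidableEq α] (w : List α) : Polynomial ℝ :=
  ∑ i ∈ Finset.range w.length, Polynomial.C (acorrBit w (i + 1) : ℝ) * Polynomial.X ^ i

/-- The inverse autocorrelation polynomial `A_w(x)`, over `ℂ`. -/
noncomputable def APolyC {α : Type*} [DecidableEq α] (w : List α) : Polynomial ℂ :=
  ∑ i ∈ Finset.range w.length, Polynomial.C (acorrBit w (i + 1) : ℂ) * Polynomial.X ^ i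

/-- The recurrence polynomial `P_w(x) = 1 + (x - q)·A_w(x)`, over `ℝ`. -/
noncomputable def PPolyR (q : ℕ) {α : Type*} [DecidableEq α] (w : List α) : Polynomial ℝ :=
  1 + (Polynomial.X - Polynomial.C (q : ℝ)) * APolyR w

/-- The recurrence polynomial `P_w(x) = 1 + (x - q)·A_w(x)`, over `ℂ`. -/
noncomputable def PPolyC (q : ℕ) {α : Type*} [DecidableEq α] (w : List α) : Polynomial ℂ :=
  1 + (Polynomial.X - Polynomial.C (q : ℂ)) * APolyC w

/-- `h_w(n)`: the number of words of length `n` over `Fin q` whose last `w.length` letters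
equal `w` and which contain no other occurrence of `w` as consecutive letters. -/
noncomputable def hitCount (q : ℕ) (w : List (Fin q)) (n : ℕ) : ℕ :=
  Nat.card {l : List (Fin q) // l.length = n ∧ l.drop (n - w.length) = w ∧
    ∀ p < n - w.length, (l.drop p).take w.length ≠ w}

/-- The first hitting probability `P_h(w,n) = h_w(n+k)/q^(n+k)` where `k = w.length`. -/
noncomputable def hitProb (q : ℕ) (w : List (Fin q)) (n : ℕ) : ℝ :=
  (hitCount q w (n + w.length) : ℝ) / (q : ℝ) ^ (n + w.length)

/-- The constant `C_{w/w'} = ln(1+r)/r` with `r = (A_w(q) − A_{w'}(q))/A_{w'}(q)`. -/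
noncomputable def Crat (q : ℕ) (w w' : List (Fin q)) : ℝ :=
  Real.log (1 + ((APolyR w).eval (q : ℝ) - (APolyR w').eval (q : ℝ)) / (APolyR w').eval (q : ℝ)) /
    (((APolyR w).eval (q : ℝ) - (APolyR w').eval (q : ℝ)) / (APolyR w').eval (q : ℝ))

/-- The partial-fraction coefficient `c_w = 1/P_w'(α_m)`. -/
noncomputable def cwCoef (q : ℕ) (w : List (Fin q)) (αm : ℝ) : ℝ :=
  1 / ((PPolyR q w).derivative.eval αm)

section AuxStmt15

open Finset Polynomial

lemma acorrBit_le_one' {α : Type*} [DecidableEq α] (w : List α) (i : ℕ) : acorrBit w i ≤ 1 := by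
  unfold acorrBit; split <;> simp

lemma acorrBit_length' {α : Type*} [DecidableEq α] (w : List α) : acorrBit w w.length = 1 := by
  simp [acorrBit]

/-- bit at `i` (with `i ≤ len`) gives pointwise period `len - i`. -/
lemma period_of_bit' {α : Type*} [DecidableEq α] {w : List α} {i : ℕ} (hi : i ≤ w.length)
    (hb : acorrBit w i = 1) :
    ∀ m, m + (w.length - i) < w.length → w[m]? = w[m + (w.length - i)]? := by
  intro m hm
  unfold acorrBit at hb
  split at hb
  · rename_i heq
    have h1 : (w.take i)[m]? = w[m]? := List.getElem?_take_of_lt (by omega)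
    have h2 : (w.drop (w.length - i))[m]? = w[(w.length - i) + m]? :=
      List.getElem?_drop
    rw [← h1, heq, h2]
    congr 1; omega
  · omega

/-- pointwise period 1 propagates through chains. -/
lemma period_chain' {α : Type*} [DecidableEq α] {w : List α}
    (h1 : ∀ m, m + 1 < w.length → w[m]? = w[m + 1]?) :
    ∀ d m, m + d < w.length → w[m]? = w[m + d]? := by
  intro d
  induction d with
  | zero => simp
  | succ n ih =>
    intro m hm
    have := ih m (by omega)
    rw [this, h1 (m + n) (by omega)]
    congr 1

/-- two pointwise periods `t`, `t+1` with `2t+1 ≤ len` give pointwise period 1. -/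
lemma period_one_of_succ' {α : Type*} [DecidableEq α] {w : List α} {t : ℕ}
    (hk : 2 * t + 1 ≤ w.length)
    (hp : ∀ m, m + t < w.length → w[m]? = w[m + t]?)
    (hp1 : ∀ m, m + (t + 1) < w.length → w[m]? = w[m + (t + 1)]?) :
    ∀ m, m + 1 < w.length → w[m]? = w[m + 1]? := by
  have step1 : ∀ m, m + t + 1 < w.length → w[m]? = w[m + 1]? := by
    intro m hm
    have a := hp1 m (by omega)
    have b := hp (m + 1) (by omega)
    rw [a, b]; congr 1; omega
  intro m hm
  by_cases hc : m + t + 1 < w.length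
  · exact step1 m hc
  · have hmt : t ≤ m := by omega
    have a := hp (m - t) (by omega)
    have b := hp (m + 1 - t) (by omega)
    have c := step1 (m - t) (by omega)
    have e1 : m - t + t = m := by omega
    have e2 : m + 1 - t + t = m + 1 := by omega
    rw [e1] at a; rw [e2] at b
    have e3 : m + 1 - t = m - t + 1 := by omega
    rw [e3] at b
    rw [← a, c, b]

/-- pointwise period 1 implies all bits are 1. -/
lemma bits_of_const' {α : Type*} [DecidableEq α] {w : List α}
    (h1 : ∀ m, m + 1 < w.length → w[m]? = w[m + 1]?) :
    ∀ i, i ≤ w.length → acorrBit w i = 1 := by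
  have hall := period_chain' h1
  intro i hi
  unfold acorrBit
  rw [if_pos]
  apply List.ext_getElem?
  intro m
  by_cases hm : m < i
  · rw [List.getElem?_take_of_lt hm, List.getElem?_drop]
    by_cases hmw : w.length - i + m < w.length
    · have := hall (w.length - i) m (by omega)
      rw [this]; congr 1; omega
    · rw [List.getElem?_eq_none (by omega), List.getElem?_eq_none (by omega)]
  · rw [List.getElem?_eq_none (by simp; omega), List.getElem?_eq_none (by simp; omega)]

lemma eval_APolyR' {α : Type*} [DecidableEq α] (w : List α) (x : ℝ) :
    (APolyR w).eval x = ∑ i ∈ range w.length, (acorrBit w (i + 1) : ℝ) * x ^ i := by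
  simp [APolyR, eval_finset_sum]

lemma eval_deriv_APolyR' {α : Type*} [DecidableEq α] (w : List α) (x : ℝ) :
    (APolyR w).derivative.eval x
      = ∑ i ∈ range w.length, (acorrBit w (i + 1) : ℝ) * (i * x ^ (i - 1)) := by
  rw [APolyR, derivative_sum, eval_finset_sum]
  apply Finset.sum_congr rfl
  intro i _
  rw [derivative_C_mul_X_pow]
  simp; ring

/-- binary top-difference extraction. -/
lemma top_diff' (f g : ℕ → ℕ) (hf : ∀ i, f i ≤ 1) (hg : ∀ i, g i ≤ 1) :
    ∀ k : ℕ, (∑ i ∈ range k, g i * 2 ^ i < ∑ i ∈ range k, f i * 2 ^ i) →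
    ∃ j < k, f j = 1 ∧ g j = 0 ∧ ∀ i, j < i → i < k → f i = g i := by
  have hub : ∀ (u : ℕ → ℕ), (∀ i, u i ≤ 1) → ∀ n, ∑ i ∈ range n, u i * 2 ^ i < 2 ^ n := by
    intro u hu n
    calc ∑ i ∈ range n, u i * 2 ^ i ≤ ∑ i ∈ range n, 1 * 2 ^ i := by
          apply Finset.sum_le_sum; intro i _; exact Nat.mul_le_mul_right _ (hu i)
      _ < 2 ^ n := by
          simp only [one_mul]
          induction n with
          | zero => simp
          | succ m ih => rw [Finset.sum_range_succ, pow_succ]; omega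
  intro k
  induction k with
  | zero => simp
  | succ n ih =>
    intro h
    rw [Finset.sum_range_succ, Finset.sum_range_succ] at h
    rcases Nat.lt_trichotomy (f n) (g n) with hlt | heq | hgt
    · exfalso
      have h1 : f n = 0 := by have := hg n; omega
      have h2 : g n = 1 := by have := hg n; omega
      have := hub f hf n
      rw [h1, h2] at h
      omega
    · obtain ⟨j, hj, h1, h2, h3⟩ := ih (by rw [heq] at h; exact Nat.lt_of_add_lt_add_right h)
      exact ⟨j, by omega, h1, h2, fun i hji hin => by
        rcases Nat.lt_or_ge i n with hi | hi
        · exact h3 i hji hi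
        · have : i = n := by omega
          rw [this, heq]⟩
    · have h1 : f n = 1 := by have := hf n; omega
      have h2 : g n = 0 := by have := hg n; omega
      exact ⟨n, by omega, h1, h2, fun i h h' => by omega⟩

lemma sum_pow_le_two_mul' {Q : ℝ} (hQ : 2 ≤ Q) (m : ℕ) :
    ∑ i ∈ range (m + 1), Q ^ i ≤ 2 * Q ^ m := by
  have hg := geom_sum_mul Q (m + 1)
  have hp : (0:ℝ) < Q ^ m := pow_pos (by linarith) m
  have hQ1 : (1:ℝ) ≤ Q - 1 := by linarith
  have hpow : Q ^ (m + 1) = Q * Q ^ m := by ring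
  nlinarith [hg, hp, sq_nonneg (Q - 2)]

end AuxStmt15

set_option maxHeartbeats 1000000 in
theorem stmt15 :
    ∃ C : ℝ, 0 < C ∧ ∀ (q k : ℕ), 2 ≤ q → 9 ≤ k →
      ∀ w w' : List (Fin q), w.length = k → w'.length = k →
        (APolyR w').eval 2 < (APolyR w).eval 2 →
        |(APolyR w).eval (q : ℝ) ^ 2 * (APolyR w').derivative.eval (q : ℝ) -
            (APolyR w').eval (q : ℝ) ^ 2 * (APolyR w).derivative.eval (q : ℝ)| /
          ((APolyR w').eval (q : ℝ) ^ 3 * (APolyR w).eval (q : ℝ)) ≤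
        C * k * (q : ℝ) ^ (-(k : ℝ) / 3 + 4) *
          (((APolyR w).eval (q : ℝ) - (APolyR w').eval (q : ℝ)) /
            (APolyR w').eval (q : ℝ)) := by
  classical
  refine ⟨40, by norm_num, ?_⟩
  intro q k hq hk w w' hw hw' hlt
  obtain ⟨K, rfl⟩ : ∃ K, k = K + 1 := ⟨k - 1, by omega⟩
  have hQ2 : (2:ℝ) ≤ (q:ℝ) := by exact_mod_cast hq
  set Q : ℝ := (q:ℝ) with hQdef
  have hQ0 : (0:ℝ) < Q := by linarith
  have hQ1 : (1:ℝ) < Q := by linarith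
  have hQk : ∀ n : ℕ, (0:ℝ) < Q ^ n := fun n => pow_pos hQ0 n
  have hc1 : ∀ i, acorrBit w (i + 1) ≤ 1 := fun i => acorrBit_le_one' w _
  have hc'1 : ∀ i, acorrBit w' (i + 1) ≤ 1 := fun i => acorrBit_le_one' w' _
  have hcR1 : ∀ i, ((acorrBit w (i + 1) : ℕ) : ℝ) ≤ 1 := fun i => by exact_mod_cast hc1 i
  have hc'R1 : ∀ i, ((acorrBit w' (i + 1) : ℕ) : ℝ) ≤ 1 := fun i => by exact_mod_cast hc'1 i
  have hck : acorrBit w (K + 1) = 1 := by rw [← hw]; exact acorrBit_length' w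
  have hc'k : acorrBit w' (K + 1) = 1 := by rw [← hw']; exact acorrBit_length' w'
  -- top difference index j
  have hlt2 : ∑ i ∈ Finset.range (K + 1), acorrBit w' (i + 1) * 2 ^ i
      < ∑ i ∈ Finset.range (K + 1), acorrBit w (i + 1) * 2 ^ i := by
    rw [eval_APolyR' w, eval_APolyR' w', hw, hw'] at hlt
    have hc : ((∑ i ∈ Finset.range (K + 1), acorrBit w' (i + 1) * 2 ^ i : ℕ) : ℝ)
        < ((∑ i ∈ Finset.range (K + 1), acorrBit w (i + 1) * 2 ^ i : ℕ) : ℝ) := by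
      push_cast
      exact hlt
    exact_mod_cast hc
  obtain ⟨j, hjk, hcj, hc'j, hagree⟩ :=
    top_diff' (fun i => acorrBit w (i + 1)) (fun i => acorrBit w' (i + 1)) hc1 hc'1 (K + 1) hlt2
  have hjk2 : j + 1 ≤ K := by
    by_contra hcon
    have hjK : j = K := by omega
    rw [hjK, hc'k] at hc'j
    omega
  -- rewrite goal into sums
  rw [eval_APolyR' w, eval_APolyR' w', eval_deriv_APolyR' w, eval_deriv_APolyR' w', hw, hw']
  set A := ∑ i ∈ Finset.range (K + 1), (acorrBit w (i + 1) : ℝ) * Q ^ i with hAdef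
  set B := ∑ i ∈ Finset.range (K + 1), (acorrBit w' (i + 1) : ℝ) * Q ^ i with hBdef
  set A' := ∑ i ∈ Finset.range (K + 1), (acorrBit w (i + 1) : ℝ) * (i * Q ^ (i - 1)) with hA'def
  set B' := ∑ i ∈ Finset.range (K + 1), (acorrBit w' (i + 1) : ℝ) * (i * Q ^ (i - 1)) with hB'def
  set E := Q ^ (-((K + 1 : ℕ) : ℝ) / 3 + 4) with hEdef
  set D := ∑ i ∈ Finset.range (K + 1),
      |(acorrBit w (i + 1) : ℝ) - (acorrBit w' (i + 1) : ℝ)| * Q ^ i with hDdef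
  set P := Q ^ K with hPdef
  clear_value Q A B A' B' E D P
  have hEpos : 0 < E := by rw [hEdef]; exact Real.rpow_pos_of_pos hQ0 _
  have hPpos : 0 < P := by rw [hPdef]; exact hQk K
  -- basic bounds
  have hBlb : P ≤ B := by
    rw [hBdef, hPdef]
    have hmem : K ∈ Finset.range (K + 1) := by simp
    have := Finset.single_le_sum
      (f := fun i => (acorrBit w' (i + 1) : ℝ) * Q ^ i)
      (fun i _ => mul_nonneg (by positivity) (hQk i).le) hmem
    rw [hc'k] at this
    simpa using this
  have hAlb : P ≤ A := by
    rw [hAdef, hPdef]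
    have hmem : K ∈ Finset.range (K + 1) := by simp
    have := Finset.single_le_sum
      (f := fun i => (acorrBit w (i + 1) : ℝ) * Q ^ i)
      (fun i _ => mul_nonneg (by positivity) (hQk i).le) hmem
    rw [hck] at this
    simpa using this
  have hub2 : ∀ u : ℕ → ℕ, (∀ i, u i ≤ 1) →
      ∑ i ∈ Finset.range (K + 1), (u i : ℝ) * Q ^ i ≤ 2 * P := by
    intro u hu
    calc ∑ i ∈ Finset.range (K + 1), (u i : ℝ) * Q ^ i
        ≤ ∑ i ∈ Finset.range (K + 1), Q ^ i := by
          apply Finset.sum_le_sum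
          intro i _
          have h1 : ((u i : ℕ) : ℝ) ≤ 1 := by exact_mod_cast hu i
          linarith only [mul_le_mul_of_nonneg_right h1 (hQk i).le]
      _ ≤ 2 * P := by rw [hPdef]; exact sum_pow_le_two_mul' hQ2 K
  have hAub : A ≤ 2 * P := by rw [hAdef]; exact hub2 _ hc1
  have hBub : B ≤ 2 * P := by rw [hBdef]; exact hub2 _ hc'1
  have hBpos : 0 < B := lt_of_lt_of_le hPpos hBlb
  have hApos : 0 < A := lt_of_lt_of_le hPpos hAlb
  -- splitting at j
  have hsplit : ∀ f : ℕ → ℝ, (∀ i, j < i → i < K + 1 → f i = 0) →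
      ∑ i ∈ Finset.range (K + 1), f i = (∑ i ∈ Finset.range j, f i) + f j := by
    intro f hf
    rw [← Finset.sum_range_add_sum_Ico f (show j + 1 ≤ K + 1 by omega), Finset.sum_range_succ]
    have hz : ∑ i ∈ Finset.Ico (j + 1) (K + 1), f i = 0 :=
      Finset.sum_eq_zero fun i hi => by
        rw [Finset.mem_Ico] at hi
        exact hf i (by omega) hi.2
    rw [hz]
    ring
  have hABsub : A - B = ∑ i ∈ Finset.range (K + 1),
      ((acorrBit w (i + 1) : ℝ) - (acorrBit w' (i + 1) : ℝ)) * Q ^ i := by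
    rw [hAdef, hBdef, ← Finset.sum_sub_distrib]
    exact Finset.sum_congr rfl fun i _ => by ring
  have hdiff : A - B = (∑ i ∈ Finset.range j,
      ((acorrBit w (i + 1) : ℝ) - (acorrBit w' (i + 1) : ℝ)) * Q ^ i) + Q ^ j := by
    rw [hABsub, hsplit _ (fun i h1 h2 => by rw [hagree i h1 h2]; ring), hcj, hc'j]
    norm_num
  set S := ∑ i ∈ Finset.range j, (acorrBit w' (i + 1) : ℝ) * Q ^ i with hSdef
  clear_value S
  have hSnonneg : 0 ≤ S := by
    rw [hSdef]
    exact Finset.sum_nonneg fun i _ => mul_nonneg (by positivity) (hQk i).le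
  have hΔlb : Q ^ j - S ≤ A - B := by
    rw [hdiff]
    have h1 : -S ≤ ∑ i ∈ Finset.range j,
        ((acorrBit w (i + 1) : ℝ) - (acorrBit w' (i + 1) : ℝ)) * Q ^ i := by
      rw [hSdef, ← Finset.sum_neg_distrib]
      apply Finset.sum_le_sum
      intro i _
      have h0 : (0:ℝ) ≤ (acorrBit w (i + 1) : ℝ) := by positivity
      linarith only [mul_nonneg h0 (hQk i).le]
    linarith only [h1]
  have hgeom : ∀ n : ℕ, ∑ i ∈ Finset.range n, Q ^ i ≤ Q ^ n - 1 := by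
    intro n
    induction n with
    | zero => simp
    | succ m ih =>
      rw [Finset.sum_range_succ, pow_succ]
      linarith only [ih, mul_nonneg (show (0:ℝ) ≤ Q - 2 by linarith) (hQk m).le]
  have hStriv : S ≤ Q ^ j - 1 := by
    have h1 : S ≤ ∑ i ∈ Finset.range j, Q ^ i := by
      rw [hSdef]
      apply Finset.sum_le_sum
      intro i _
      have h0 : (0:ℝ) ≤ (acorrBit w' (i + 1) : ℝ) := by positivity
      linarith only [mul_le_mul_of_nonneg_right (hc'R1 i) (hQk i).le]
    linarith only [h1, hgeom j]
  have hΔ1 : 1 ≤ A - B := by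
    linarith only [hΔlb, hStriv]
  -- D facts
  have hD0 : 0 ≤ D := by
    rw [hDdef]
    exact Finset.sum_nonneg fun i _ => mul_nonneg (abs_nonneg _) (hQk i).le
  have hDsplit : D = (∑ i ∈ Finset.range j,
      |(acorrBit w (i + 1) : ℝ) - (acorrBit w' (i + 1) : ℝ)| * Q ^ i) + Q ^ j := by
    rw [hDdef, hsplit _ (fun i h1 h2 => by rw [hagree i h1 h2]; simp), hcj, hc'j]
    norm_num
  have hDub : D ≤ 2 * Q ^ j := by
    rw [hDsplit]
    have h1 : ∑ i ∈ Finset.range j,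
        |(acorrBit w (i + 1) : ℝ) - (acorrBit w' (i + 1) : ℝ)| * Q ^ i
        ≤ ∑ i ∈ Finset.range j, Q ^ i := by
      apply Finset.sum_le_sum
      intro i _
      have habs1 : |(acorrBit w (i + 1) : ℝ) - (acorrBit w' (i + 1) : ℝ)| ≤ 1 := by
        rw [abs_le]
        constructor
        · have := hcR1 i; have h0 : (0:ℝ) ≤ (acorrBit w' (i+1) : ℝ) := by positivity
          have := hc'R1 i; have h0' : (0:ℝ) ≤ (acorrBit w (i+1) : ℝ) := by positivity
          linarith [hcR1 i, hc'R1 i]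
        · have h0 : (0:ℝ) ≤ (acorrBit w' (i+1) : ℝ) := by positivity
          linarith [hcR1 i]
      linarith only [mul_le_mul_of_nonneg_right habs1 (hQk i).le]
    linarith only [h1, hgeom j, hQk j]
  have hΔleD : A - B ≤ D := by
    rw [hABsub, hDdef]
    apply Finset.sum_le_sum
    intro i _
    exact mul_le_mul_of_nonneg_right (le_abs_self _) (le_of_lt (hQk i))
  -- derivative bounds
  have hiQ : ∀ i : ℕ, (i : ℝ) * Q ^ (i - 1) * Q = i * Q ^ i := by
    intro i
    cases i with
    | zero => simp
    | succ n => rw [Nat.add_sub_cancel, pow_succ]; ring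
  have hA'f : Q * A' ≤ (K + 1 : ℕ) * A := by
    rw [hA'def, Finset.mul_sum, hAdef, Finset.mul_sum]
    apply Finset.sum_le_sum
    intro i hi
    have h1 : Q * ((acorrBit w (i + 1) : ℝ) * (i * Q ^ (i - 1)))
        = (acorrBit w (i + 1) : ℝ) * (i * Q ^ i) := by
      rw [← hiQ i]; ring
    rw [h1]
    have hik : (i : ℝ) ≤ (K + 1 : ℕ) := by
      exact_mod_cast le_of_lt (Finset.mem_range.mp hi)
    have h0 : (0:ℝ) ≤ (acorrBit w (i + 1) : ℝ) := by positivity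
    linarith only [mul_le_mul_of_nonneg_right hik (mul_nonneg h0 (hQk i).le)]
  have hA'nonneg : 0 ≤ A' := by
    rw [hA'def]
    exact Finset.sum_nonneg fun i _ =>
      mul_nonneg (by positivity) (mul_nonneg (Nat.cast_nonneg _) (hQk _).le)
  have hB'nonneg : 0 ≤ B' := by
    rw [hB'def]
    exact Finset.sum_nonneg fun i _ =>
      mul_nonneg (by positivity) (mul_nonneg (Nat.cast_nonneg _) (hQk _).le)
  have hdsub : A' - B' = ∑ i ∈ Finset.range (K + 1),
      ((acorrBit w (i + 1) : ℝ) - (acorrBit w' (i + 1) : ℝ)) * (i * Q ^ (i - 1)) := by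
    rw [hA'def, hB'def, ← Finset.sum_sub_distrib]
    exact Finset.sum_congr rfl fun i _ => by ring
  have habs : Q * |A' - B'| ≤ (K + 1 : ℕ) * D := by
    have h1 : |A' - B'| ≤ ∑ i ∈ Finset.range (K + 1),
        |(acorrBit w (i + 1) : ℝ) - (acorrBit w' (i + 1) : ℝ)| * (i * Q ^ (i - 1)) := by
      rw [hdsub]
      refine le_trans (Finset.abs_sum_le_sum_abs _ _) ?_
      apply Finset.sum_le_sum
      intro i _
      rw [abs_mul, abs_of_nonneg (mul_nonneg (Nat.cast_nonneg i) (hQk (i-1)).le)]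
    calc Q * |A' - B'| ≤ Q * ∑ i ∈ Finset.range (K + 1),
          |(acorrBit w (i + 1) : ℝ) - (acorrBit w' (i + 1) : ℝ)| * (i * Q ^ (i - 1)) :=
          mul_le_mul_of_nonneg_left h1 (le_of_lt hQ0)
      _ = ∑ i ∈ Finset.range (K + 1),
          |(acorrBit w (i + 1) : ℝ) - (acorrBit w' (i + 1) : ℝ)| * (i * Q ^ i) := by
          rw [Finset.mul_sum]
          refine Finset.sum_congr rfl fun i _ => ?_
          rw [← hiQ i]; ring
      _ ≤ ∑ i ∈ Finset.range (K + 1),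
          |(acorrBit w (i + 1) : ℝ) - (acorrBit w' (i + 1) : ℝ)| * ((K + 1 : ℕ) * Q ^ i) := by
          apply Finset.sum_le_sum
          intro i hi
          have hik : (i : ℝ) ≤ (K + 1 : ℕ) := by
            exact_mod_cast le_of_lt (Finset.mem_range.mp hi)
          have h0 := abs_nonneg ((acorrBit w (i + 1) : ℝ) - (acorrBit w' (i + 1) : ℝ))
          linarith only [mul_le_mul_of_nonneg_right hik (mul_nonneg h0 (hQk i).le)]
      _ = (K + 1 : ℕ) * D := by
          rw [hDdef, Finset.mul_sum]
          exact Finset.sum_congr rfl fun i _ => by ring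
  -- numerator bound
  have hnum : Q * |A ^ 2 * B' - B ^ 2 * A'| ≤
      (K + 1 : ℕ) * (A ^ 2 * D + 2 * A ^ 2 * (A - B)) := by
    have h1 : |A ^ 2 * B' - B ^ 2 * A'| ≤ A ^ 2 * |A' - B'| + (A - B) * (A + B) * A' := by
      have hid : A ^ 2 * B' - B ^ 2 * A' = A ^ 2 * (B' - A') + (A ^ 2 - B ^ 2) * A' := by ring
      rw [hid]
      refine le_trans (abs_add_le _ _) ?_
      have hAB0 : (0:ℝ) ≤ A - B := by linarith only [hΔ1]
      have hABp : (0:ℝ) ≤ A + B := by linarith only [hApos, hBpos]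
      rw [abs_mul, abs_mul, abs_of_nonneg (sq_nonneg A), abs_sub_comm B' A',
        abs_of_nonneg hA'nonneg, abs_of_nonneg
          (show (0:ℝ) ≤ A ^ 2 - B ^ 2 by linarith only [mul_nonneg hAB0 hABp])]
      linarith only [show (A ^ 2 - B ^ 2) * A' = (A - B) * (A + B) * A' from by ring]
    have h2 : Q * (A ^ 2 * |A' - B'|) ≤ A ^ 2 * ((K + 1 : ℕ) * D) := by
      calc Q * (A ^ 2 * |A' - B'|) = A ^ 2 * (Q * |A' - B'|) := by ring
        _ ≤ A ^ 2 * ((K + 1 : ℕ) * D) := mul_le_mul_of_nonneg_left habs (sq_nonneg A)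
    have h3 : Q * ((A - B) * (A + B) * A') ≤ (A - B) * ((2 * A) * ((K + 1 : ℕ) * A)) := by
      have hin : (A + B) * (Q * A') ≤ (2 * A) * ((K + 1 : ℕ) * A) := by
        apply mul_le_mul (by linarith only [hΔ1, hBpos]) hA'f
          (mul_nonneg hQ0.le hA'nonneg) (by linarith only [hApos])
      have h4 : 0 ≤ A - B := by linarith only [hΔ1]
      calc Q * ((A - B) * (A + B) * A') = (A - B) * ((A + B) * (Q * A')) := by ring
        _ ≤ (A - B) * ((2 * A) * ((K + 1 : ℕ) * A)) := mul_le_mul_of_nonneg_left hin h4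
    calc Q * |A ^ 2 * B' - B ^ 2 * A'|
        ≤ Q * (A ^ 2 * |A' - B'| + (A - B) * (A + B) * A') :=
          mul_le_mul_of_nonneg_left h1 (le_of_lt hQ0)
      _ = Q * (A ^ 2 * |A' - B'|) + Q * ((A - B) * (A + B) * A') := by ring
      _ ≤ A ^ 2 * ((K + 1 : ℕ) * D) + (A - B) * ((2 * A) * ((K + 1 : ℕ) * A)) :=
          add_le_add h2 h3
      _ = (K + 1 : ℕ) * (A ^ 2 * D + 2 * A ^ 2 * (A - B)) := by ring
  -- exponent comparison helper
  have hrpow : ∀ a b : ℕ, ((a : ℝ) ≤ -((K + 1 : ℕ) : ℝ) / 3 + 4 + (b : ℝ)) →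
      Q ^ a ≤ E * Q ^ b := by
    intro a b hab
    rw [hEdef, ← Real.rpow_natCast Q a, ← Real.rpow_natCast Q b, ← Real.rpow_add hQ0]
    exact (Real.rpow_le_rpow_left_iff hQ1).mpr hab
  have hKcast : (9:ℝ) ≤ ((K + 1 : ℕ) : ℝ) := by exact_mod_cast hk
  -- THE KEY INEQUALITY
  have key : 2 * P * (D + 2 * (A - B)) ≤ 40 * Q * E * (A - B) * P ^ 2 := by
    rcases le_or_gt (3 * j) (2 * K + 14) with hcase | hcase
    · -- case 1 : j small
      have hjexp : Q ^ (j + K) ≤ E * Q ^ (2 * K + 1) := by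
        apply hrpow
        have hc3 : ((3 * j : ℕ) : ℝ) ≤ ((2 * K + 14 : ℕ) : ℝ) := by exact_mod_cast hcase
        push_cast at hc3 ⊢
        linarith
      have hPQ : P * Q ^ j = Q ^ (j + K) := by
        rw [hPdef, ← pow_add]
        congr 1
        omega
      have hQP2 : Q * P ^ 2 = Q ^ (2 * K + 1) := by
        rw [hPdef, ← pow_mul, ← pow_succ']
        congr 1
        omega
      have h5 : 2 * P * (D + 2 * (A - B)) ≤ 12 * (P * Q ^ j) := by
        have h51 : D + 2 * (A - B) ≤ 6 * Q ^ j := by linarith only [hDub, hΔleD]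
        linarith only [mul_le_mul_of_nonneg_left h51 hPpos.le]
      have h6 : (12:ℝ) * (P * Q ^ j) ≤ 12 * (E * Q ^ (2 * K + 1)) := by
        rw [hPQ]; linarith only [hjexp]
      have h7 : (12:ℝ) * (E * Q ^ (2 * K + 1)) ≤ 40 * Q * E * (A - B) * P ^ 2 := by
        rw [← hQP2]
        have hX : (0:ℝ) < E * (Q * P ^ 2) :=
          mul_pos hEpos (mul_pos hQ0 (pow_pos hPpos 2))
        linarith only [mul_le_mul_of_nonneg_left hΔ1 hX.le, hX]
      linarith only [h5, h6, h7]
    · -- case 2 : j large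
      have hk19 : 19 ≤ K + 1 := by omega
      set H := (K + 1) / 2 + 1 with hHdef
      set half := H + 1 with hhalfdef
      clear_value H half
      have hhj : half + 4 ≤ j := by omega
      have hnotconst : ¬ (∀ m, m + 1 < w'.length → w'[m]? = w'[m + 1]?) := by
        intro hcnst
        have hall := bits_of_const' hcnst
        have hle : (APolyR w).eval 2 ≤ (APolyR w').eval 2 := by
          rw [eval_APolyR' w, eval_APolyR' w', hw, hw']
          apply Finset.sum_le_sum
          intro i hi
          rw [hall (i + 1) (by rw [hw']; have := Finset.mem_range.mp hi; omega)]
          have h2 : ((acorrBit w (i + 1)) : ℝ) ≤ 1 := hcR1 i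
          have h3 : (0:ℝ) < 2 ^ i := by positivity
          push_cast
          linarith only [mul_le_mul_of_nonneg_right h2 h3.le]
        linarith only [hle, hlt]
      have hpair : ∀ m, half ≤ m → m + 2 ≤ j →
          (acorrBit w' (m + 1) : ℝ) * Q ^ m + (acorrBit w' (m + 2) : ℝ) * Q ^ (m + 1)
            ≤ Q ^ (m + 1) := by
        intro m hm hmj
        by_cases hb : acorrBit w' (m + 2) = 1
        · have hb1 : acorrBit w' (m + 1) = 0 := by
            by_contra hb1
            have hb1' : acorrBit w' (m + 1) = 1 := by
              have := acorrBit_le_one' w' (m + 1); omega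
            apply hnotconst
            have hp1 := period_of_bit' (w := w') (i := m + 2) (by rw [hw']; omega) hb
            have hp2 := period_of_bit' (w := w') (i := m + 1) (by rw [hw']; omega) hb1'
            have he : w'.length - (m + 1) = (w'.length - (m + 2)) + 1 := by
              rw [hw']; omega
            rw [he] at hp2
            exact period_one_of_succ' (t := w'.length - (m + 2))
              (by rw [hw']; omega) hp1 hp2
          rw [hb, hb1]
          norm_num
        · have hb0 : acorrBit w' (m + 2) = 0 := by
            have := acorrBit_le_one' w' (m + 2); omega
          rw [hb0]
          have h3 : Q ^ m ≤ Q ^ (m + 1) := pow_le_pow_right₀ (le_of_lt hQ1) (by omega)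
          push_cast
          linarith only [mul_le_mul_of_nonneg_right (hc'R1 m) (hQk m).le, h3]
      have hg : ∀ n, n ≤ j →
          3 * Q * (∑ i ∈ Finset.Ico half n, (acorrBit w' (i + 1) : ℝ) * Q ^ i)
            ≤ 4 * Q ^ n := by
        intro n
        induction n using Nat.strong_induction_on with
        | _ n ih =>
          intro hnj
          rcases lt_or_ge n (half + 2) with hsm | hlg
          · rcases lt_or_ge n (half + 1) with hn1 | hn1
            · rw [Finset.Ico_eq_empty (by omega)]
              simp only [Finset.sum_empty, mul_zero]
              linarith [hQk n]
            · have hn : n = half + 1 := by omega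
              subst hn
              rw [Nat.Ico_succ_singleton, Finset.sum_singleton]
              have h2 := hc'R1 half
              have h3 := hQk half
              have e : Q ^ (half + 1) = Q ^ half * Q := pow_succ Q half
              have t1 := mul_le_mul_of_nonneg_right h2 (le_of_lt (mul_pos h3 hQ0))
              linarith only [t1, (mul_pos h3 hQ0).le, e]
          · obtain ⟨m, rfl⟩ : ∃ m, n = m + 2 := ⟨n - 2, by omega⟩
            rw [show m + 2 = (m + 1) + 1 from rfl,
              Finset.sum_Ico_succ_top (by omega), Finset.sum_Ico_succ_top (by omega)]
            simp only [show m + 1 + 1 = m + 2 from rfl]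
            have hIH := ih m (by omega) (by omega)
            have hp := hpair m (by omega) (by omega)
            have h1 := hQk m
            have hQQ : (4:ℝ) ≤ Q * Q := by nlinarith
            have h2 : Q ^ (m + 1) = Q ^ m * Q := pow_succ Q m
            have h3 : Q ^ (m + 2) = Q ^ m * Q * Q := by rw [pow_succ, pow_succ]
            set G := ∑ i ∈ Finset.Ico half m, (acorrBit w' (i + 1) : ℝ) * Q ^ i with hGdef
            calc 3 * Q * (G + (acorrBit w' (m + 1) : ℝ) * Q ^ m
                  + (acorrBit w' (m + 2) : ℝ) * Q ^ (m + 1))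
                = 3 * Q * G + 3 * Q * ((acorrBit w' (m + 1) : ℝ) * Q ^ m
                  + (acorrBit w' (m + 2) : ℝ) * Q ^ (m + 1)) := by ring
              _ ≤ 4 * Q ^ m + 3 * Q * Q ^ (m + 1) := by
                  have h4 := mul_le_mul_of_nonneg_left hp
                    (show (0:ℝ) ≤ 3 * Q by linarith only [hQ0])
                  linarith only [h4, hIH]
              _ ≤ 4 * Q ^ (m + 2) := by
                  rw [h3, h2]
                  linarith only [mul_le_mul_of_nonneg_left hQQ (le_of_lt h1)]
      have hSsplit : S = (∑ i ∈ Finset.range half, (acorrBit w' (i + 1) : ℝ) * Q ^ i)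
          + ∑ i ∈ Finset.Ico half j, (acorrBit w' (i + 1) : ℝ) * Q ^ i := by
        rw [hSdef, ← Finset.sum_range_add_sum_Ico _ (show half ≤ j by omega)]
      have hlow : ∑ i ∈ Finset.range half, (acorrBit w' (i + 1) : ℝ) * Q ^ i
          ≤ 2 * Q ^ H := by
        calc ∑ i ∈ Finset.range half, (acorrBit w' (i + 1) : ℝ) * Q ^ i
            ≤ ∑ i ∈ Finset.range half, Q ^ i := by
              apply Finset.sum_le_sum
              intro i _
              linarith only [mul_le_mul_of_nonneg_right (hc'R1 i) (hQk i).le]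
          _ ≤ 2 * Q ^ H := by rw [hhalfdef]; exact sum_pow_le_two_mul' hQ2 H
      have h16 : 16 * Q ^ half ≤ Q ^ j := by
        have e1 : Q ^ j = Q ^ half * Q ^ (j - half) := by
          rw [← pow_add]; congr 1; omega
        have e3 : (2:ℝ) ^ 4 ≤ (2:ℝ) ^ (j - half) :=
          pow_le_pow_right₀ (by norm_num) (by omega)
        have e4 : (2:ℝ) ^ (j - half) ≤ Q ^ (j - half) :=
          pow_le_pow_left₀ (by norm_num) hQ2 _
        have h5 := hQk half
        have e5 : (16:ℝ) ≤ Q ^ (j - half) := by norm_num at e3; linarith only [e3, e4]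
        linarith only [e1, mul_le_mul_of_nonneg_left e5 h5.le]
      have hgj := hg j le_rfl
      have hq4 : 4 * S ≤ 3 * Q ^ j := by
        have h12 : 3 * Q * S ≤ 6 * Q ^ half + 4 * Q ^ j := by
          rw [hSsplit]
          have h13 := mul_le_mul_of_nonneg_left hlow (show (0:ℝ) ≤ 3 * Q by linarith)
          have h14 : Q * Q ^ H = Q ^ half := by rw [hhalfdef, pow_succ]; ring
          linarith only [h13, h14, hgj]
        have h17 : 24 * Q ^ half ≤ (3:ℝ)/2 * Q ^ j := by linarith only [h16]
        have h18 : 12 * Q * S ≤ (35:ℝ)/2 * Q ^ j := by linarith only [h12, h17]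
        have h19 : (35:ℝ)/2 * Q ^ j ≤ 9 * Q * Q ^ j := by
          linarith only [mul_nonneg (show (0:ℝ) ≤ Q - 2 by linarith only [hQ2]) (hQk j).le,
            (hQk j).le]
        have h20 : (3 * Q) * (4 * S) ≤ (3 * Q) * (3 * Q ^ j) := by linarith only [h18, h19]
        exact le_of_mul_le_mul_left h20 (by linarith only [hQ0])
      have hΔq : Q ^ j ≤ 4 * (A - B) := by linarith only [hΔlb, hq4]
      -- finish case 2
      have h1k : (1:ℝ) ≤ E * Q ^ (K + 1) := by
        have h0 := hrpow 0 (K + 1) (by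
          have h9 : (0:ℝ) ≤ (K:ℝ) := Nat.cast_nonneg K
          push_cast
          linarith)
        simpa using h0
      have hQPk : Q * P = Q ^ (K + 1) := by rw [hPdef, pow_succ]; ring
      have hD10 : D + 2 * (A - B) ≤ 10 * (A - B) := by linarith only [hDub, hΔq]
      have h40 : 20 * P ≤ 40 * Q * E * P ^ 2 := by
        have h2 : 40 * Q * E * P ^ 2 = 40 * (E * Q ^ (K + 1)) * P := by
          rw [← hQPk]; ring
        rw [h2]
        linarith only [mul_nonneg (show (0:ℝ) ≤ E * Q ^ (K + 1) - 1 by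
          linarith only [h1k]) hPpos.le, hPpos]
      calc 2 * P * (D + 2 * (A - B)) ≤ 2 * P * (10 * (A - B)) :=
            mul_le_mul_of_nonneg_left hD10 (by linarith only [hPpos])
        _ = (20 * P) * (A - B) := by ring
        _ ≤ (40 * Q * E * P ^ 2) * (A - B) :=
            mul_le_mul_of_nonneg_right h40 (by linarith only [hΔ1])
        _ = 40 * Q * E * (A - B) * P ^ 2 := by ring
  -- final assembly
  rw [div_le_iff₀ (mul_pos (pow_pos hBpos 3) hApos)]
  have hgoal_eq : 40 * ((K + 1 : ℕ) : ℝ) * E * ((A - B) / B) * (B ^ 3 * A)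
      = 40 * ((K + 1 : ℕ) : ℝ) * E * (A - B) * (B ^ 2 * A) := by
    field_simp [hBpos.ne']
  rw [hgoal_eq]
  refine le_of_mul_le_mul_left ?_ hQ0
  have hK1pos : (0:ℝ) < ((K + 1 : ℕ) : ℝ) := by positivity
  calc Q * |A ^ 2 * B' - B ^ 2 * A'|
      ≤ ((K + 1 : ℕ) : ℝ) * (A ^ 2 * D + 2 * A ^ 2 * (A - B)) := hnum
    _ ≤ ((K + 1 : ℕ) : ℝ) * ((2 * P * (D + 2 * (A - B))) * A) := by
        apply mul_le_mul_of_nonneg_left _ (le_of_lt hK1pos)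
        have h1 : A * (D + 2 * (A - B)) ≤ (2 * P) * (D + 2 * (A - B)) :=
          mul_le_mul_of_nonneg_right hAub (by linarith only [hD0, hΔ1])
        have h2 : A ^ 2 * D + 2 * A ^ 2 * (A - B) = (A * (D + 2 * (A - B))) * A := by ring
        rw [h2]
        exact mul_le_mul_of_nonneg_right h1 (le_of_lt hApos)
    _ ≤ ((K + 1 : ℕ) : ℝ) * ((40 * Q * E * (A - B) * P ^ 2) * A) :=
        mul_le_mul_of_nonneg_left
          (mul_le_mul_of_nonneg_right key (le_of_lt hApos)) (le_of_lt hK1pos)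
    _ ≤ Q * (40 * ((K + 1 : ℕ) : ℝ) * E * (A - B) * (B ^ 2 * A)) := by
        have hPB : P ^ 2 ≤ B ^ 2 := by
          linarith only [mul_le_mul hBlb hBlb hPpos.le (hPpos.le.trans hBlb),
            sq_abs P, sq_abs B]
        have hF : (0:ℝ) ≤ 40 * ((K + 1 : ℕ) : ℝ) * E * (A - B) * A * Q := by
          have h1 : (0:ℝ) ≤ A - B := by linarith
          exact mul_nonneg (mul_nonneg (mul_nonneg (mul_nonneg
            (by positivity) hEpos.le) h1) hApos.le) hQ0.le
        calc ((K + 1 : ℕ) : ℝ) * ((40 * Q * E * (A - B) * P ^ 2) * A)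
            = (40 * ((K + 1 : ℕ) : ℝ) * E * (A - B) * A * Q) * P ^ 2 := by ring
          _ ≤ (40 * ((K + 1 : ℕ) : ℝ) * E * (A - B) * A * Q) * B ^ 2 :=
              mul_le_mul_of_nonneg_left hPB hF
          _ = Q * (40 * ((K + 1 : ℕ) : ℝ) * E * (A - B) * (B ^ 2 * A)) := by ring
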